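/- Let X be a real random variable with E X ∈ (0,∞] (the mean may be infinite), let (X_k)_{k≥1} be i.i.d. copies of X, put S_0 = 0 and S_n = X_1 + … + X_n for n ≥ 1, and let H be the renewal measure H(B) = Σ_{n≥0} P(S_n ∈ B). Then there exist constants α, β > 0 such that H((x, x+h]) ≤ α h + β for all x ∈ ℝ and all h > 0. -/

import Mathlib

open MeasureTheory ProbabilityTheory Filter Set
open scoped ENNReal

noncomputable section

namespace RenewalAux

variable {Ω : Type*} [MeasurableSpace Ω]

/-- The "next visit after a gap of `m`" set. -/
def fSet (S : ℕ → Ω → ℝ) (I : Set ℝ) (m k k' : ℕ) : Set Ω :=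
  {ω | k + m ≤ k' ∧ S k' ω ∈ I ∧ ∀ n, k + m ≤ n → n < k' → S n ω ∉ I}

/-- Greedy chain sets: `grSet S I m i k` is the event that the `(i+1)`-st element of the
greedy (gap `m`) chain of visits to `I` happens at time `k`. -/
def grSet (S : ℕ → Ω → ℝ) (I : Set ℝ) (m : ℕ) : ℕ → ℕ → Set Ω
  | 0, k => {ω | S k ω ∈ I ∧ ∀ j, j < k → S j ω ∉ I}
  | (i+1), k => ⋃ k', grSet S I m i k' ∩ fSet S I m k' k

variable {S : ℕ → Ω → ℝ} {I : Set ℝ} {m : ℕ}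

theorem gr_subset_visit : ∀ i k, grSet S I m i k ⊆ {ω | S k ω ∈ I}
  | 0, k => fun ω h => h.1
  | (i+1), k => fun ω h => by
      simp only [grSet, mem_iUnion] at h
      obtain ⟨k', hk'⟩ := h
      exact hk'.2.2.1

theorem gr_zero_disj : Pairwise (Function.onFun Disjoint (fun k => grSet S I m 0 k)) := by
  intro k k' hkk'
  simp only [Function.onFun]
  rw [Set.disjoint_left]
  rintro ω ⟨h1, h2⟩ ⟨h1', h2'⟩
  rcases lt_or_gt_of_ne hkk' with h | h
  exacts [h2' k h h1, h2 k' h h1']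

theorem f_disj (k : ℕ) : Pairwise (Function.onFun Disjoint (fun k' => fSet S I m k k')) := by
  intro a b hab
  simp only [Function.onFun]
  rw [Set.disjoint_left]
  rintro ω ⟨h1, h2, h3⟩ ⟨h1', h2', h3'⟩
  rcases lt_or_gt_of_ne hab with h | h
  exacts [h3' a h1 h h2, h3 b h1' h h2']

/-- Covering: every visit time lies within `m` of some greedy chain element. -/
theorem exists_gr (hm : 1 ≤ m) {ω : Ω} :
    ∀ n, S n ω ∈ I → ∃ i k, ω ∈ grSet S I m i k ∧ k ≤ n ∧ n < k + m := by
  classical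
  intro n
  induction n using Nat.strong_induction_on with
  | _ n IH =>
    intro hn
    by_cases hB : ∃ n', S n' ω ∈ I ∧ n' + m ≤ n
    · obtain ⟨n0, hn0⟩ := hB
      set Q : ℕ → Prop := fun t => S t ω ∈ I ∧ t + m ≤ n with hQ
      have hn0n : n0 ≤ n := le_trans (Nat.le_add_right _ _) hn0.2
      have ht0 : Q (Nat.findGreatest Q n) := Nat.findGreatest_spec hn0n hn0
      set t0 := Nat.findGreatest Q n with hdeft0
      have ht0lt : t0 < n := by omega
      obtain ⟨i, k, hgr, hk1, hk2⟩ := IH t0 ht0lt ht0.1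
      have hex : ∃ t, S t ω ∈ I ∧ k + m ≤ t := ⟨n, hn, by omega⟩
      have hs := Nat.find_spec hex
      set s := Nat.find hex with hdefs
      have hsn : s ≤ n := Nat.find_min' hex ⟨hn, by omega⟩
      refine ⟨i + 1, s, ?_, hsn, ?_⟩
      · refine mem_iUnion.2 ⟨k, hgr, hs.2, hs.1, fun t h1 h2 hv => ?_⟩
        exact Nat.find_min hex h2 ⟨hv, h1⟩
      · by_contra hcon
        push_neg at hcon
        have hQs : Q s := ⟨hs.1, hcon⟩
        have hst0 : t0 < s := lt_of_lt_of_le hk2 hs.2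
        exact Nat.findGreatest_is_greatest hst0 hsn hQs
    · push_neg at hB
      have hex : ∃ t, S t ω ∈ I := ⟨n, hn⟩
      refine ⟨0, Nat.find hex, ⟨Nat.find_spec hex, fun j hj => Nat.find_min hex hj⟩,
        Nat.find_min' hex hn, ?_⟩
      by_contra hcon
      push_neg at hcon
      exact absurd hcon (not_le.2 (hB _ (Nat.find_spec hex)))


variable {Ω : Type*} [MeasurableSpace Ω]

/-- Tuple of the variables indexed by a finset. -/
def tup (Xk : ℕ → Ω → ℝ) (F : Finset ℕ) : Ω → ((i : F) → ℝ) := fun ω i => Xk i ω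

theorem tup_measurable {Xk : ℕ → Ω → ℝ} (h : ∀ n, Measurable (Xk n)) (F : Finset ℕ) :
    Measurable (tup Xk F) :=
  measurable_pi_lambda _ fun i => h i

variable {Xk : ℕ → Ω → ℝ} {S : ℕ → Ω → ℝ} {I : Set ℝ} {m : ℕ} {P : Measure Ω}

/-- Partial sums as functions of the first `k` coordinates. -/
theorem visit_comap (hS : ∀ n ω, S n ω = ∑ i ∈ Finset.range n, Xk i ω)
    {j k : ℕ} (hjk : j ≤ k) {B : Set ℝ} (hB : MeasurableSet B) :
    MeasurableSet[MeasurableSpace.comap (tup Xk (Finset.range k)) MeasurableSpace.pi]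
      {ω | S j ω ∈ B} := by
  classical
  refine ⟨(fun v : (i : (Finset.range k : Finset ℕ)) → ℝ =>
      ∑ l ∈ Finset.range j, if h : l ∈ Finset.range k then v ⟨l, h⟩ else 0) ⁻¹' B, ?_, ?_⟩
  · refine (Finset.measurable_sum _ fun l _ => ?_) hB
    by_cases h : l ∈ Finset.range k
    · simpa [h] using measurable_pi_apply (⟨l, h⟩ : (Finset.range k : Finset ℕ))
    · simp only [h]; simpa using measurable_const
  · ext ω
    simp only [mem_preimage, tup, mem_setOf_eq, hS j ω]
    congr! 1
    refine Finset.sum_congr rfl fun l hl => ?_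
    rw [dif_pos (Finset.mem_range.2 (lt_of_lt_of_le (Finset.mem_range.1 hl) hjk))]

theorem gr_comap (hS : ∀ n ω, S n ω = ∑ i ∈ Finset.range n, Xk i ω) (hI : MeasurableSet I) :
    ∀ i k K, k ≤ K →
      MeasurableSet[MeasurableSpace.comap (tup Xk (Finset.range K)) MeasurableSpace.pi]
        (grSet S I m i k) := by
  intro i
  induction i with
  | zero =>
    intro k K hkK
    have : grSet S I m 0 k =
        {ω | S k ω ∈ I} ∩ ⋂ (j : ℕ), ⋂ (_ : j < k), {ω | S j ω ∈ I}ᶜ := by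
      ext ω; simp [grSet, mem_iInter]
    rw [this]
    exact (visit_comap hS hkK hI).inter
      (MeasurableSet.iInter fun j => MeasurableSet.iInter fun hj =>
        (visit_comap hS (le_trans hj.le hkK) hI).compl)
  | succ i IH =>
    intro k K hkK
    rw [show grSet S I m (i+1) k = ⋃ k', grSet S I m i k' ∩ fSet S I m k' k from rfl]
    refine MeasurableSet.iUnion fun k' => ?_
    by_cases hP : k' + m ≤ k
    · have : fSet S I m k' k =
          {ω | S k ω ∈ I} ∩ ⋂ (n : ℕ), ⋂ (_ : k' + m ≤ n), ⋂ (_ : n < k), {ω | S n ω ∈ I}ᶜ := by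
        ext ω; simp [fSet, hP, mem_iInter]
      rw [this]
      exact (IH k' K (by omega)).inter ((visit_comap hS hkK hI).inter
        (MeasurableSet.iInter fun n => MeasurableSet.iInter fun h1 =>
          MeasurableSet.iInter fun h2 => (visit_comap hS (le_trans h2.le hkK) hI).compl))
    · have : fSet S I m k' k = ∅ := by
        ext ω; simp [fSet, hP]
      simp [this]

theorem gr_measurable (hS : ∀ n ω, S n ω = ∑ i ∈ Finset.range n, Xk i ω)
    (hXm : ∀ n, Measurable (Xk n)) (hI : MeasurableSet I) (i k : ℕ) :
    MeasurableSet (grSet S I m i k) := by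
  obtain ⟨C, hC, hCeq⟩ := gr_comap (m := m) hS hI i k k le_rfl
  exact hCeq ▸ (tup_measurable hXm _) hC

theorem S_measurable (hS : ∀ n ω, S n ω = ∑ i ∈ Finset.range n, Xk i ω)
    (hXm : ∀ n, Measurable (Xk n)) (n : ℕ) : Measurable (S n) := by
  have : S n = fun ω => ∑ i ∈ Finset.range n, Xk i ω := funext fun ω => hS n ω
  rw [this]
  exact Finset.measurable_sum _ fun i _ => hXm i

theorem f_measurable (hS : ∀ n ω, S n ω = ∑ i ∈ Finset.range n, Xk i ω)
    (hXm : ∀ n, Measurable (Xk n)) (hI : MeasurableSet I) (k k' : ℕ) :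
    MeasurableSet (fSet S I m k k') := by
  by_cases hP : k + m ≤ k'
  · have : fSet S I m k k' =
        {ω | S k' ω ∈ I} ∩ ⋂ (n : ℕ), ⋂ (_ : k + m ≤ n), ⋂ (_ : n < k'), {ω | S n ω ∈ I}ᶜ := by
      ext ω; simp [fSet, hP, mem_iInter]
    rw [this]
    exact ((S_measurable hS hXm k') hI).inter
      (MeasurableSet.iInter fun n => MeasurableSet.iInter fun h1 =>
        MeasurableSet.iInter fun h2 => ((S_measurable hS hXm n) hI).compl)
  · have : fSet S I m k k' = ∅ := by ext ω; simp [fSet, hP]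
    simp [this]



variable {Ω : Type*} [MeasurableSpace Ω]

/-- Window tuple. -/
def wtup (Xk : ℕ → Ω → ℝ) (k M : ℕ) : Ω → (Fin M → ℝ) := fun ω i => Xk (k + i) ω

theorem wtup_measurable {Xk : ℕ → Ω → ℝ} (h : ∀ n, Measurable (Xk n)) (k M : ℕ) :
    Measurable (wtup Xk k M) :=
  measurable_pi_lambda _ fun i => h _

/-- The escape set: after time `m` (up to `M`) all partial sums exceed 1. -/
def escSet (m M : ℕ) : Set (Fin M → ℝ) :=
  {v | ∀ j, m ≤ j → j ≤ M →
    1 < ∑ l ∈ Finset.range j, (if h : l < M then v ⟨l, h⟩ else 0)}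

theorem escSet_measurable (m M : ℕ) : MeasurableSet (escSet m M) := by
  have : escSet m M = ⋂ (j : ℕ), ⋂ (_ : m ≤ j), ⋂ (_ : j ≤ M),
      (fun v : Fin M → ℝ =>
        ∑ l ∈ Finset.range j, (if h : l < M then v ⟨l, h⟩ else 0)) ⁻¹' (Set.Ioi 1) := by
    ext v; simp [escSet, Set.mem_iInter]
  rw [this]
  refine MeasurableSet.iInter fun j => MeasurableSet.iInter fun _ =>
    MeasurableSet.iInter fun _ => ?_
  refine (Finset.measurable_sum _ fun l _ => ?_) measurableSet_Ioi
  by_cases h : l < M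
  · simpa [h] using measurable_pi_apply (⟨l, h⟩ : Fin M)
  · simp only [h]; simpa using measurable_const

def aset (Xk : ℕ → Ω → ℝ) (k m M : ℕ) : Set Ω := wtup Xk k M ⁻¹' escSet m M

theorem aset_measurable {Xk : ℕ → Ω → ℝ} (h : ∀ n, Measurable (Xk n)) (k m M : ℕ) :
    MeasurableSet (aset Xk k m M) :=
  (wtup_measurable h k M) (escSet_measurable m M)

variable {Xk : ℕ → Ω → ℝ} {S : ℕ → Ω → ℝ}

theorem diff_eq_sum (hS : ∀ n ω, S n ω = ∑ i ∈ Finset.range n, Xk i ω) (k j : ℕ) (ω : Ω) :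
    S (k + j) ω - S k ω = ∑ l ∈ Finset.range j, Xk (k + l) ω := by
  rw [hS, hS, ← Finset.sum_Ico_eq_sub _ (Nat.le_add_right k j),
    Finset.sum_Ico_eq_sum_range]
  simp

theorem mem_aset_iff (hS : ∀ n ω, S n ω = ∑ i ∈ Finset.range n, Xk i ω)
    {k m M : ℕ} {ω : Ω} :
    ω ∈ aset Xk k m M ↔ ∀ j, m ≤ j → j ≤ M → 1 < S (k + j) ω - S k ω := by
  simp only [aset, Set.mem_preimage, escSet, Set.mem_setOf_eq, wtup]
  refine forall_congr' fun j => ?_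
  refine imp_congr_right fun _ => imp_congr_right fun hjM => ?_
  rw [diff_eq_sum hS]
  have : ∀ l ∈ Finset.range j,
      (if h : l < M then Xk (k + (⟨l, h⟩ : Fin M)) ω else 0) = Xk (k + l) ω := by
    intro l hl
    rw [dif_pos (lt_of_lt_of_le (Finset.mem_range.1 hl) hjM)]
  rw [Finset.sum_congr rfl this]

theorem aset_antitone (hS : ∀ n ω, S n ω = ∑ i ∈ Finset.range n, Xk i ω) {k m : ℕ} :
    Antitone fun M => aset Xk k m M := by
  intro M M' hMM' ω hω
  rw [mem_aset_iff hS] at hω ⊢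
  exact fun j h1 h2 => hω j h1 (le_trans h2 hMM')



section Prob

variable {P : Measure Ω} [IsProbabilityMeasure P]

theorem wtup_law {ν : Measure ℝ} [IsProbabilityMeasure ν]
    (hXm : ∀ n, Measurable (Xk n))
    (hindep : iIndepFun Xk P)
    (hid : ∀ n, P.map (Xk n) = ν) (k M : ℕ) :
    P.map (wtup Xk k M) = Measure.pi (fun _ : Fin M => ν) := by
  classical
  refine (Measure.pi_eq fun s hs => ?_).symm
  set s' : ℕ → Set ℝ := fun i => if h : i - k < M then s ⟨i - k, h⟩ else Set.univ with hs'
  have hs'm : ∀ i, MeasurableSet (s' i) := fun i => by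
    by_cases h : i - k < M
    · simpa [hs', h] using hs _
    · simp [hs', h]
  have hpre : wtup Xk k M ⁻¹' (Set.univ.pi s) = ⋂ i ∈ Finset.Ico k (k + M), Xk i ⁻¹' s' i := by
    ext ω
    simp only [Set.mem_preimage, Set.mem_univ_pi, Set.mem_iInter, Finset.mem_Ico, wtup,
      Set.mem_setOf_eq]
    constructor
    · rintro h i ⟨h1, h2⟩
      have hik : i - k < M := by omega
      have := h ⟨i - k, hik⟩
      have e : k + (i - k) = i := by omega
      rw [e] at this
      simpa [hs', hik] using this
    · intro h i
      have h2 := h (k + (i : ℕ)) ⟨Nat.le_add_right _ _, by omega⟩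
      have e : k + (i : ℕ) - k = (i : ℕ) := by omega
      simpa [hs', e, i.isLt] using h2
  rw [Measure.map_apply (wtup_measurable hXm k M) (MeasurableSet.univ_pi hs), hpre,
    hindep.measure_inter_preimage_eq_mul (Finset.Ico k (k + M)) (fun i _ => hs'm i)]
  have hterm : ∀ i, P (Xk i ⁻¹' s' i) = ν (s' i) := fun i => by
    rw [← hid i, Measure.map_apply (hXm i) (hs'm i)]
  rw [Finset.prod_congr rfl fun i _ => hterm i, Finset.prod_Ico_eq_prod_range]
  have e2 : k + M - k = M := by omega
  rw [e2, ← Fin.prod_univ_eq_prod_range (fun l => ν (s' (k + l))) M]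
  refine Finset.prod_congr rfl fun i _ => ?_
  have e : k + (i : ℕ) - k = (i : ℕ) := by omega
  simp [hs', e, i.isLt]

theorem indep_gr_aset (hS : ∀ n ω, S n ω = ∑ i ∈ Finset.range n, Xk i ω)
    (hXm : ∀ n, Measurable (Xk n))
    (hindep : iIndepFun Xk P)
    {I : Set ℝ} (hI : MeasurableSet I) (i k m M : ℕ) :
    P (grSet S I m i k ∩ (aset Xk k m M)ᶜ)
      = P (grSet S I m i k) * P ((aset Xk k m M)ᶜ) := by
  classical
  have hdisj : Disjoint (Finset.range k) (Finset.Ico k (k + M)) := by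
    rw [Finset.disjoint_left]
    intro a ha hb
    rw [Finset.mem_range] at ha
    rw [Finset.mem_Ico] at hb
    omega
  have hIF : IndepFun (tup Xk (Finset.range k)) (tup Xk (Finset.Ico k (k + M))) P :=
    hindep.indepFun_finset _ _ hdisj hXm
  obtain ⟨C, hC, hCeq⟩ := gr_comap (m := m) hS hI i k k le_rfl
  set ρ : ((i : (Finset.Ico k (k + M) : Finset ℕ)) → ℝ) → (Fin M → ℝ) :=
    fun v i => v ⟨k + (i : ℕ),
      Finset.mem_Ico.2 ⟨Nat.le_add_right _ _, Nat.add_lt_add_left i.isLt k⟩⟩ with hρ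
  have hρm : Measurable ρ := measurable_pi_lambda _ fun i => measurable_pi_apply _
  have haset : (aset Xk k m M)ᶜ = tup Xk (Finset.Ico k (k + M)) ⁻¹' (ρ ⁻¹' escSet m M)ᶜ := by
    have hw : wtup Xk k M = ρ ∘ tup Xk (Finset.Ico k (k + M)) := rfl
    rw [Set.preimage_compl, aset, hw, Set.preimage_comp]
  rw [← hCeq, haset]
  exact hIF.measure_inter_preimage_eq_mul C _ hC ((hρm (escSet_measurable m M)).compl)

end Prob


section Core

variable {P : Measure Ω} [IsProbabilityMeasure P]

theorem aInter_const {ν : Measure ℝ} [IsProbabilityMeasure ν]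
    (hXm : ∀ n, Measurable (Xk n))
    (hindep : iIndepFun Xk P)
    (hid : ∀ n, P.map (Xk n) = ν)
    (hS : ∀ n ω, S n ω = ∑ i ∈ Finset.range n, Xk i ω) (k m : ℕ) :
    P (⋂ M, aset Xk k m M) = P (⋂ M, aset Xk 0 m M) := by
  have key : ∀ k M, P (aset Xk k m M) = Measure.pi (fun _ : Fin M => ν) (escSet m M) := by
    intro k M
    rw [aset, ← Measure.map_apply (wtup_measurable hXm k M) (escSet_measurable m M),
      wtup_law hXm hindep hid]
  have h1 : ∀ k, P (⋂ M, aset Xk k m M) = ⨅ M, P (aset Xk k m M) := by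
    intro k
    refine Directed.measure_iInter
      (fun M => (aset_measurable hXm k m M).nullMeasurableSet)
      ((aset_antitone hS).directed_ge) ⟨0, measure_ne_top _ _⟩
  rw [h1 k, h1 0]
  exact iInf_congr fun M => (key k M).trans (key 0 M).symm

theorem core_bound
    (hS : ∀ n ω, S n ω = ∑ i ∈ Finset.range n, Xk i ω)
    (hXm : ∀ n, Measurable (Xk n))
    (hindep : iIndepFun Xk P)
    {m : ℕ} (hm : 1 ≤ m) {y : ℝ}
    (hpk : ∀ k, (2⁻¹ : ℝ≥0∞) < P (⋂ M, aset Xk k m M)) :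
    ∑' n, P {ω | S n ω ∈ Set.Ioc y (y + 1)} ≤ 2 * m := by
  classical
  set I : Set ℝ := Set.Ioc y (y + 1) with hIdef
  have hI : MeasurableSet I := measurableSet_Ioc
  set g : ℕ → ℝ≥0∞ := fun i => ∑' k, P (grSet S I m i k) with hg
  -- step 0 : g 0 ≤ 1
  have hg0 : g 0 ≤ 1 := by
    have hU := measure_iUnion (μ := P) (f := fun k => grSet S I m 0 k) gr_zero_disj
      (fun k => gr_measurable hS hXm hI 0 k)
    calc g 0 = P (⋃ k, grSet S I m 0 k) := hU.symm
      _ ≤ 1 := prob_le_one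
  -- recursion
  have hrec : ∀ i, g (i + 1) ≤ 2⁻¹ * g i := by
    intro i
    have half : ∀ k, P (grSet S I m i k ∩ (⋂ M, aset Xk k m M)ᶜ)
        ≤ 2⁻¹ * P (grSet S I m i k) := by
      intro k
      have hiUnion : (⋂ M, aset Xk k m M)ᶜ = ⋃ M, (aset Xk k m M)ᶜ := by
        rw [Set.compl_iInter]
      rw [hiUnion, Set.inter_iUnion]
      have hmono : Monotone fun M => grSet S I m i k ∩ (aset Xk k m M)ᶜ := by
        intro M M' hMM'
        exact Set.inter_subset_inter le_rfl
          (Set.compl_subset_compl.2 (aset_antitone hS hMM'))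
      rw [hmono.measure_iUnion]
      have : ∀ M, P (grSet S I m i k ∩ (aset Xk k m M)ᶜ)
          = P (grSet S I m i k) * (1 - P (aset Xk k m M)) := by
        intro M
        rw [indep_gr_aset hS hXm hindep hI i k m M,
          prob_compl_eq_one_sub (aset_measurable hXm k m M)]
      simp only [this]
      rw [← ENNReal.mul_iSup, ← ENNReal.sub_iInf]
      have hInf : ⨅ M, P (aset Xk k m M) = P (⋂ M, aset Xk k m M) :=
        (Directed.measure_iInter
          (fun M => (aset_measurable hXm k m M).nullMeasurableSet)
          ((aset_antitone hS).directed_ge) ⟨0, measure_ne_top _ _⟩).symm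
      rw [hInf, mul_comm]
      have h12 : (1 : ℝ≥0∞) - P (⋂ M, aset Xk k m M) ≤ 2⁻¹ := by
        have := (hpk k).le
        calc (1 : ℝ≥0∞) - P (⋂ M, aset Xk k m M) ≤ 1 - 2⁻¹ := tsub_le_tsub_left this 1
        _ = 2⁻¹ := by
            rw [ENNReal.one_sub_inv_two]
      exact mul_le_mul_left h12 _
    have step1 : g (i + 1) ≤ ∑' k, ∑' k', P (grSet S I m i k ∩ fSet S I m k k') := by
      rw [hg, ENNReal.tsum_comm]
      refine ENNReal.tsum_le_tsum fun k' => ?_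
      rw [show grSet S I m (i + 1) k' = ⋃ k, grSet S I m i k ∩ fSet S I m k k' from rfl]
      exact measure_iUnion_le _
    refine le_trans step1 ?_
    have step2 : ∀ k, ∑' k', P (grSet S I m i k ∩ fSet S I m k k')
        ≤ 2⁻¹ * P (grSet S I m i k) := by
      intro k
      have hdisj : Pairwise (Function.onFun Disjoint
          fun k' => grSet S I m i k ∩ fSet S I m k k') := by
        intro a b hab
        exact Disjoint.mono Set.inter_subset_right Set.inter_subset_right (f_disj k hab)
      rw [← measure_iUnion hdisj (fun k' =>
        (gr_measurable hS hXm hI i k).inter (f_measurable hS hXm hI k k'))]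
      refine le_trans (measure_mono ?_) (half k)
      refine Set.iUnion_subset fun k' => ?_
      rintro ω ⟨hgr, hf⟩
      refine ⟨hgr, fun hmem => ?_⟩
      have hSk : S k ω ∈ I := gr_subset_visit i k hgr
      obtain ⟨hkk', hSk', _⟩ := hf
      have hj : m ≤ k' - k := by omega
      have h1 : 1 < S (k + (k' - k)) ω - S k ω :=
        (mem_aset_iff hS).1 (Set.mem_iInter.1 hmem (k' - k)) (k' - k) hj le_rfl
      have e : k + (k' - k) = k' := by omega
      rw [e] at h1
      rw [hIdef] at hSk hSk'
      simp only [Set.mem_Ioc] at hSk hSk'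
      linarith [hSk.1, hSk'.2]
    calc ∑' k, ∑' k', P (grSet S I m i k ∩ fSet S I m k k')
        ≤ ∑' k, 2⁻¹ * P (grSet S I m i k) := ENNReal.tsum_le_tsum step2
      _ = 2⁻¹ * g i := by rw [ENNReal.tsum_mul_left]
  have hgi : ∀ i, g i ≤ 2⁻¹ ^ i := by
    intro i
    induction i with
    | zero => simpa using hg0
    | succ i IH =>
      calc g (i + 1) ≤ 2⁻¹ * g i := hrec i
        _ ≤ 2⁻¹ * 2⁻¹ ^ i := mul_le_mul_right IH _
        _ = 2⁻¹ ^ (i + 1) := by rw [pow_succ, mul_comm]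
  have hsum_g : ∑' i, g i ≤ 2 := by
    calc ∑' i, g i ≤ ∑' i, (2⁻¹ : ℝ≥0∞) ^ i := ENNReal.tsum_le_tsum hgi
      _ = (1 - 2⁻¹)⁻¹ := ENNReal.tsum_geometric 2⁻¹
      _ = 2 := by simp [ENNReal.one_sub_inv_two]
  -- covering
  have hcover : ∀ n, P {ω | S n ω ∈ I}
      ≤ ∑' i, ∑' k, (if k ≤ n ∧ n < k + m then P (grSet S I m i k) else 0) := by
    intro n
    have hsub : {ω | S n ω ∈ I} ⊆
        ⋃ i, ⋃ k, (if k ≤ n ∧ n < k + m then grSet S I m i k else ∅) := by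
      intro ω hω
      obtain ⟨i, k, h1, h2, h3⟩ := exists_gr hm n hω
      refine Set.mem_iUnion.2 ⟨i, Set.mem_iUnion.2 ⟨k, ?_⟩⟩
      rw [if_pos ⟨h2, h3⟩]
      exact h1
    refine le_trans (measure_mono hsub) ?_
    refine le_trans (measure_iUnion_le _) (ENNReal.tsum_le_tsum fun i => ?_)
    refine le_trans (measure_iUnion_le _) (ENNReal.tsum_le_tsum fun k => ?_)
    split_ifs with h
    · exact le_rfl
    · simp
  calc ∑' n, P {ω | S n ω ∈ I}
      ≤ ∑' n, ∑' i, ∑' k, (if k ≤ n ∧ n < k + m then P (grSet S I m i k) else 0) :=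
        ENNReal.tsum_le_tsum hcover
    _ = ∑' i, ∑' k, ∑' n, (if k ≤ n ∧ n < k + m then P (grSet S I m i k) else 0) := by
        rw [ENNReal.tsum_comm]
        exact tsum_congr fun i => ENNReal.tsum_comm
    _ = ∑' i, ∑' k, (m : ℝ≥0∞) * P (grSet S I m i k) := by
        refine tsum_congr fun i => tsum_congr fun k => ?_
        rw [tsum_eq_sum (s := Finset.Ico k (k + m))
          (fun n hn => by rw [if_neg]; rw [Finset.mem_Ico] at hn; omega)]
        rw [Finset.sum_congr rfl fun n hn => if_pos (by rw [Finset.mem_Ico] at hn; omega)]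
        rw [Finset.sum_const, Nat.card_Ico]
        simp [nsmul_eq_mul]
    _ = (m : ℝ≥0∞) * ∑' i, g i := by
        rw [← ENNReal.tsum_mul_left]
        exact tsum_congr fun i => ENNReal.tsum_mul_left.symm ▸ rfl
    _ ≤ (m : ℝ≥0∞) * 2 := mul_le_mul_right hsum_g _
    _ = 2 * m := by rw [mul_comm]

end Core

end RenewalAux


open RenewalAux

/-- For a random walk with positive (possibly infinite) drift, the renewal measure of
intervals grows at most linearly: there are `α, β > 0` with `H((x,x+h]) ≤ α h + β`
for all `x` and all `h > 0`. -/
theorem renewal_measure_linear_bound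
    {Ω : Type*} [MeasurableSpace Ω] (P : Measure Ω) [IsProbabilityMeasure P]
    (X : Ω → ℝ) (hX : Measurable X)
    (Xk : ℕ → Ω → ℝ) (hXkmeas : ∀ n, Measurable (Xk n))
    (hindep : iIndepFun Xk P)
    (hident : ∀ n, P.map (Xk n) = P.map X)
    (S : ℕ → Ω → ℝ) (hS : ∀ n ω, S n ω = ∑ i ∈ Finset.range n, Xk i ω)
    -- `E X ∈ (0, ∞]` : the negative part is finite and smaller than the positive part
    (hneg : ∫⁻ ω, ENNReal.ofReal (-X ω) ∂P < ⊤)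
    (hmean : ∫⁻ ω, ENNReal.ofReal (-X ω) ∂P < ∫⁻ ω, ENNReal.ofReal (X ω) ∂P) :
    ∃ α > (0 : ℝ), ∃ β > (0 : ℝ), ∀ x : ℝ, ∀ h > (0 : ℝ),
      ∑' n, P {ω | S n ω ∈ Set.Ioc x (x + h)} ≤ ENNReal.ofReal (α * h + β) := by
  classical
  haveI : IsProbabilityMeasure (P.map X) := Measure.isProbabilityMeasure_map hX.aemeasurable
  -- Step 1 : choose a truncation level `c` with positive truncated mean
  have hpoint : ∀ ω, (⨆ c : ℕ, ENNReal.ofReal (min (X ω) c)) = ENNReal.ofReal (X ω) := by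
    intro ω
    refine le_antisymm (iSup_le fun c => ENNReal.ofReal_le_ofReal (min_le_left _ _)) ?_
    obtain ⟨c, hc⟩ := exists_nat_ge (X ω)
    exact le_iSup_of_le c (le_of_eq (by rw [min_eq_left hc]))
  have hsup : (∫⁻ ω, ENNReal.ofReal (X ω) ∂P)
      = ⨆ c : ℕ, ∫⁻ ω, ENNReal.ofReal (min (X ω) c) ∂P := by
    have hmeas : ∀ c : ℕ, Measurable fun ω => ENNReal.ofReal (min (X ω) (c : ℝ)) :=
      fun c => ENNReal.measurable_ofReal.comp (hX.min measurable_const)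
    have hmono : Monotone fun (c : ℕ) (ω : Ω) => ENNReal.ofReal (min (X ω) (c : ℝ)) := by
      intro a b hab ω
      exact ENNReal.ofReal_le_ofReal (min_le_min le_rfl (Nat.cast_le.2 hab))
    have hls := lintegral_iSup (μ := P) hmeas hmono
    rw [← hls]
    exact lintegral_congr fun ω => (hpoint ω).symm
  obtain ⟨c, hc⟩ : ∃ c : ℕ,
      (∫⁻ ω, ENNReal.ofReal (-X ω) ∂P) < ∫⁻ ω, ENNReal.ofReal (min (X ω) c) ∂P := by
    rw [hsup] at hmean
    exact lt_iSup_iff.1 hmean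
  -- Step 2 : the truncated variables
  set Y : ℕ → Ω → ℝ := fun i ω => min (Xk i ω) c with hYdef
  set Y0 : Ω → ℝ := fun ω => min (X ω) c with hY0def
  have hY0meas : Measurable Y0 := hX.min measurable_const
  have habs : ∀ x : ℝ, |min x (c : ℝ)| ≤ (c : ℝ) + max (-x) 0 := by
    intro x
    rw [abs_le]
    constructor
    · rcases le_total x c with hxc | hxc
      · rw [min_eq_left hxc]
        have h1 : -x ≤ max (-x) 0 := le_max_left _ _
        have h2 : (0:ℝ) ≤ c := Nat.cast_nonneg c
        linarith
      · rw [min_eq_right hxc]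
        have h2 : (0:ℝ) ≤ max (-x) 0 := le_max_right _ _
        have h3 : (0:ℝ) ≤ c := Nat.cast_nonneg c
        linarith
    · have h1 : min x (c:ℝ) ≤ c := min_le_right _ _
      have h2 : (0:ℝ) ≤ max (-x) 0 := le_max_right _ _
      linarith
  have hofmax : ∀ x : ℝ, ENNReal.ofReal (max (-x) 0) = ENNReal.ofReal (-x) := by
    intro x
    rcases le_total 0 (-x) with hx | hx
    · rw [max_eq_left hx]
    · rw [max_eq_right hx, ENNReal.ofReal_of_nonpos hx, ENNReal.ofReal_zero]
  have hY0int : Integrable Y0 P := by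
    refine ⟨hY0meas.aestronglyMeasurable, ?_⟩
    rw [hasFiniteIntegral_iff_norm]
    calc ∫⁻ ω, ENNReal.ofReal ‖Y0 ω‖ ∂P
        ≤ ∫⁻ ω, (ENNReal.ofReal (c : ℝ) + ENNReal.ofReal (-X ω)) ∂P := by
          refine lintegral_mono fun ω => ?_
          rw [Real.norm_eq_abs]
          calc ENNReal.ofReal |Y0 ω| ≤ ENNReal.ofReal ((c : ℝ) + max (-X ω) 0) :=
                ENNReal.ofReal_le_ofReal (habs (X ω))
            _ ≤ ENNReal.ofReal (c : ℝ) + ENNReal.ofReal (max (-X ω) 0) :=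
                ENNReal.ofReal_add_le
            _ = ENNReal.ofReal (c : ℝ) + ENNReal.ofReal (-X ω) := by rw [hofmax]
      _ = ENNReal.ofReal (c : ℝ) + ∫⁻ ω, ENNReal.ofReal (-X ω) ∂P := by
          rw [lintegral_add_left measurable_const, lintegral_const, measure_univ, mul_one]
      _ < ⊤ := by
          exact ENNReal.add_lt_top.2 ⟨ENNReal.ofReal_lt_top, hneg⟩
  have hnegY0 : ∀ ω, ENNReal.ofReal (-Y0 ω) = ENNReal.ofReal (-X ω) := by
    intro ω
    rcases le_total (X ω) (c : ℝ) with hxc | hxc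
    · rw [hY0def]; simp only; rw [min_eq_left hxc]
    · rw [hY0def]; simp only; rw [min_eq_right hxc,
        ENNReal.ofReal_of_nonpos (by have := Nat.cast_nonneg (α := ℝ) c; linarith),
        ENNReal.ofReal_of_nonpos (by linarith)]
  have hEY0 : 0 < ∫ ω, Y0 ω ∂P := by
    rw [integral_eq_lintegral_pos_part_sub_lintegral_neg_part hY0int]
    have e1 : (∫⁻ ω, ENNReal.ofReal (-Y0 ω) ∂P) = ∫⁻ ω, ENNReal.ofReal (-X ω) ∂P :=
      lintegral_congr fun ω => hnegY0 ω
    have e2 : (∫⁻ ω, ENNReal.ofReal (Y0 ω) ∂P) = ∫⁻ ω, ENNReal.ofReal (min (X ω) c) ∂P := rfl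
    rw [e1, e2, sub_pos]
    have hfin : (∫⁻ ω, ENNReal.ofReal (min (X ω) c) ∂P) ≠ ⊤ := by
      refine ne_top_of_le_ne_top ?_ (lintegral_mono fun ω =>
        ENNReal.ofReal_le_ofReal (min_le_right (X ω) (c:ℝ)))
      rw [lintegral_const, measure_univ, mul_one]
      exact ENNReal.ofReal_ne_top
    exact (ENNReal.toReal_lt_toReal hneg.ne hfin).2 hc
  have hidXk : ∀ i, IdentDistrib (Xk i) X P P :=
    fun i => ⟨(hXkmeas i).aemeasurable, hX.aemeasurable, hident i⟩
  have hidY : ∀ i, IdentDistrib (Y i) Y0 P P :=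
    fun i => (hidXk i).comp (measurable_id.min measurable_const)
  have hYint : Integrable (Y 0) P := (hidY 0).integrable_iff.2 hY0int
  have hidY' : ∀ i, IdentDistrib (Y i) (Y 0) P P := fun i => (hidY i).trans (hidY 0).symm
  have hpairY : Pairwise (Function.onFun (IndepFun · · P) Y) := by
    intro i j hij
    exact (hindep.indepFun hij).comp (measurable_id.min measurable_const)
      (measurable_id.min measurable_const)
  have hslln := strong_law_ae_real Y hYint hpairY hidY'
  have hEY : 0 < ∫ ω, Y 0 ω ∂P := by
    rw [(hidY 0).integral_eq]
    exact hEY0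
  -- Step 3 : a.s. S → ∞
  have hae : ∀ᵐ ω ∂P, Tendsto (fun n => S n ω) atTop atTop := by
    filter_upwards [hslln] with ω hω
    have h1 : Tendsto (fun n : ℕ => ∑ i ∈ Finset.range n, Y i ω) atTop atTop := by
      have h2 : Tendsto (fun n : ℕ =>
          ((∑ i ∈ Finset.range n, Y i ω) / n) * n) atTop atTop :=
        Filter.Tendsto.pos_mul_atTop hEY hω tendsto_natCast_atTop_atTop
      refine h2.congr' ?_
      filter_upwards [eventually_ge_atTop 1] with n hn
      have : (n : ℝ) ≠ 0 := by positivity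
      field_simp
    refine tendsto_atTop_mono (fun n => ?_) h1
    rw [hS n ω]
    exact Finset.sum_le_sum fun i _ => min_le_left _ _
  -- Step 4 : choose the gap `m`
  set Bs : ℕ → Set Ω := fun m => ⋂ M, aset Xk 0 m M with hBsdef
  have hBmem : ∀ m ω, ω ∈ Bs m ↔ ∀ j, m ≤ j → 1 < S j ω - S 0 ω := by
    intro m ω
    simp only [hBsdef, Set.mem_iInter]
    constructor
    · intro hmem j hj
      have := (mem_aset_iff hS).1 (hmem j) j hj le_rfl
      simpa using this
    · intro hall M
      rw [mem_aset_iff hS]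
      intro j h1 h2
      simpa using hall j h1
  have hBmeas : ∀ m, MeasurableSet (Bs m) :=
    fun m => MeasurableSet.iInter fun M => aset_measurable hXkmeas 0 m M
  have hsubB : {ω | Tendsto (fun n => S n ω) atTop atTop} ⊆ ⋃ m, Bs m := by
    intro ω hω
    have := (Filter.tendsto_atTop.1 hω) (1 + S 0 ω + 1)
    obtain ⟨m, hm⟩ := Filter.eventually_atTop.1 this
    refine Set.mem_iUnion.2 ⟨m, (hBmem m ω).2 fun j hj => ?_⟩
    have := hm j hj
    linarith
  have hP1 : P (⋃ m, Bs m) = 1 := by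
    rw [← prob_compl_eq_zero_iff (MeasurableSet.iUnion hBmeas)]
    have hmem : ∀ᵐ ω ∂P, ω ∈ ⋃ m, Bs m := hae.mono fun ω hω => hsubB hω
    rw [ae_iff] at hmem
    exact hmem
  have hBmono : Monotone Bs := fun a b hab ω hω =>
    (hBmem b ω).2 fun j hj => (hBmem a ω).1 hω j (le_trans hab hj)
  obtain ⟨m₁, hm₁⟩ : ∃ m₁, (2⁻¹ : ℝ≥0∞) < P (Bs m₁) := by
    have hsupB : (⨆ m, P (Bs m)) = 1 := by
      rw [← hBmono.measure_iUnion, hP1]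
    have : (2⁻¹ : ℝ≥0∞) < ⨆ m, P (Bs m) := by
      rw [hsupB]
      exact ENNReal.inv_lt_one.2 (by norm_num)
    exact lt_iSup_iff.1 this
  set m := max m₁ 1 with hmdef
  have hm : 1 ≤ m := le_max_right _ _
  have hpk : ∀ k, (2⁻¹ : ℝ≥0∞) < P (⋂ M, aset Xk k m M) := by
    intro k
    rw [aInter_const hXkmeas hindep hident hS k m]
    calc (2⁻¹ : ℝ≥0∞) < P (Bs m₁) := hm₁
      _ ≤ P (Bs m) := measure_mono (hBmono (le_max_left _ _))
  -- Step 5 : conclusion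
  have hmR : (1 : ℝ) ≤ (m : ℝ) := by exact_mod_cast hm
  refine ⟨2 * m, by linarith, 2 * m, by linarith, fun x h hh => ?_⟩
  have hunit : ∀ y : ℝ, ∑' n, P {ω | S n ω ∈ Set.Ioc y (y + 1)} ≤ 2 * (m : ℝ≥0∞) :=
    fun y => core_bound hS hXkmeas hindep hm hpk
  set N := ⌈h⌉₊ with hNdef
  have hsubI : Set.Ioc x (x + h) ⊆
      ⋃ j ∈ Finset.range N, Set.Ioc (x + j) (x + j + 1) := by
    intro t ht
    obtain ⟨ht1, ht2⟩ := ht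
    have h0 : 0 < t - x := by linarith
    have hone : 1 ≤ ⌈t - x⌉₊ := Nat.one_le_ceil_iff.2 h0
    set j := ⌈t - x⌉₊ - 1 with hjdef
    have hcast : (j : ℝ) = (⌈t - x⌉₊ : ℝ) - 1 := by
      rw [hjdef, Nat.cast_sub hone, Nat.cast_one]
    have hjN : j < N := by
      have hle : ⌈t - x⌉₊ ≤ N := Nat.ceil_le_ceil (by linarith)
      omega
    refine Set.mem_biUnion (Finset.mem_range.2 hjN) ?_
    constructor
    · have := Nat.ceil_lt_add_one h0.le  -- (⌈t-x⌉₊ : ℝ) < (t - x) + 1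
      rw [hcast] at *
      linarith
    · have := Nat.le_ceil (t - x)
      rw [hcast]
      linarith
  have hcov : ∀ n, P {ω | S n ω ∈ Set.Ioc x (x + h)}
      ≤ ∑ j ∈ Finset.range N, P {ω | S n ω ∈ Set.Ioc (x + j) (x + j + 1)} := by
    intro n
    have : {ω | S n ω ∈ Set.Ioc x (x + h)} ⊆
        ⋃ j ∈ Finset.range N, {ω | S n ω ∈ Set.Ioc (x + j) (x + j + 1)} := by
      intro ω hω
      obtain ⟨j, hj1, hj2⟩ := Set.mem_iUnion₂.1 (hsubI hω)
      exact Set.mem_iUnion₂.2 ⟨j, hj1, hj2⟩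
    exact le_trans (measure_mono this) (measure_biUnion_finset_le _ _)
  calc ∑' n, P {ω | S n ω ∈ Set.Ioc x (x + h)}
      ≤ ∑' n, ∑ j ∈ Finset.range N, P {ω | S n ω ∈ Set.Ioc (x + j) (x + j + 1)} :=
        ENNReal.tsum_le_tsum hcov
    _ = ∑ j ∈ Finset.range N, ∑' n, P {ω | S n ω ∈ Set.Ioc (x + j) (x + j + 1)} :=
        (Summable.tsum_finsetSum fun j _ => ENNReal.summable)
    _ ≤ ∑ j ∈ Finset.range N, 2 * (m : ℝ≥0∞) :=
        Finset.sum_le_sum fun j _ => hunit (x + j)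
    _ = (N : ℝ≥0∞) * (2 * m) := by
        rw [Finset.sum_const, Finset.card_range, nsmul_eq_mul]
    _ ≤ ENNReal.ofReal (2 * m * h + 2 * m) := by
        have e1 : (N : ℝ≥0∞) * (2 * m) = ENNReal.ofReal ((N : ℝ) * (2 * m)) := by
          rw [ENNReal.ofReal_mul (Nat.cast_nonneg N), ENNReal.ofReal_natCast]
          congr 1
          rw [ENNReal.ofReal_mul (by norm_num), ENNReal.ofReal_natCast]
          norm_num
        rw [e1]
        refine ENNReal.ofReal_le_ofReal ?_
        have hN : (N : ℝ) < h + 1 := Nat.ceil_lt_add_one hh.le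
        nlinarith

end
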